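/- For the symmetric BAR kernel 𝒬(x,·) = 𝒩(ax, σ²) with a ∈ (−1,1), a ≠ 0, σ > 0, invariant measure μ = 𝒩(0, σ_a²) with σ_a² = σ²/(1−a²), and 𝔥(x) = (1−a⁴)^{-1/4} exp(a²(1−a²)x²/(2(1+a²)σ²)): for every k ≥ 1 there exists a finite constant C_k such that 𝒬^{k−1}𝔥(x) = C_k exp( a^{2k} x² / (2σ_a²(1+a^{2k})) ) for all x ∈ ℝ; consequently 𝔥_k := 𝒬^{k−1}𝔥 belongs to L⁶(μ) if and only if a^{2k} < 1/5. -/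

import Mathlib

open MeasureTheory ProbabilityTheory
open scoped NNReal ENNReal

/-- The symmetric BAR transition kernel `𝒬(x,·) = 𝒩(ax, σ²)` acting on functions. -/
noncomputable def barQfun (a σ : ℝ) (f : ℝ → ℝ) (x : ℝ) : ℝ :=
  ∫ y, f y ∂(gaussianReal (a * x) (Real.toNNReal (σ ^ 2)))

/-- The function `𝔥(x) = (1-a⁴)^{-1/4} exp(a²(1-a²)x²/(2(1+a²)σ²))` of the symmetric
BAR model (the `L²(μ)`-norm of the density `q(x,·)`). -/
noncomputable def barh (a σ : ℝ) (x : ℝ) : ℝ :=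
  (1 - a ^ 4) ^ (-(1 : ℝ) / 4)
    * Real.exp (a ^ 2 * (1 - a ^ 2) * x ^ 2 / (2 * (1 + a ^ 2) * σ ^ 2))

lemma gauss_pdf_mul_exp {V c : ℝ} (hV : 0 < V) (hc : 2 * c * V < 1) (m y : ℝ) :
    gaussianPDFReal m V.toNNReal y * Real.exp (c * y ^ 2)
      = (1 - 2 * c * V) ^ (-(1 : ℝ) / 2) * Real.exp (c * m ^ 2 / (1 - 2 * c * V))
        * gaussianPDFReal (m / (1 - 2 * c * V)) ((V / (1 - 2 * c * V)).toNNReal) y := by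
  have ht : 0 < 1 - 2 * c * V := by linarith
  have hVt : 0 < V / (1 - 2 * c * V) := div_pos hV ht
  rw [gaussianPDFReal, gaussianPDFReal, Real.coe_toNNReal _ hV.le, Real.coe_toNNReal _ hVt.le]
  have h2 : 2 * Real.pi * (V / (1 - 2 * c * V)) = (2 * Real.pi * V) / (1 - 2 * c * V) := by
    ring
  rw [h2, Real.sqrt_div' _ ht.le]
  have hst : 0 < Real.sqrt (1 - 2 * c * V) := Real.sqrt_pos.2 ht
  have hs2 : 0 < Real.sqrt (2 * Real.pi * V) := Real.sqrt_pos.2 (by positivity)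
  have hpow : (1 - 2 * c * V) ^ (-(1 : ℝ) / 2) = (Real.sqrt (1 - 2 * c * V))⁻¹ := by
    rw [Real.sqrt_eq_rpow, ← Real.rpow_neg ht.le]
    norm_num
  have hexp : Real.exp (-(y - m) ^ 2 / (2 * V)) * Real.exp (c * y ^ 2)
      = Real.exp (c * m ^ 2 / (1 - 2 * c * V))
        * Real.exp (-(y - m / (1 - 2 * c * V)) ^ 2 / (2 * (V / (1 - 2 * c * V)))) := by
    rw [← Real.exp_add, ← Real.exp_add]
    congr 1
    field_simp [(by linarith : (0:ℝ) < 1 - 2 * V * c).ne']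
    ring
  rw [hpow, inv_div]
  calc (Real.sqrt (2 * Real.pi * V))⁻¹ * Real.exp (-(y - m) ^ 2 / (2 * V))
        * Real.exp (c * y ^ 2)
      = (Real.sqrt (2 * Real.pi * V))⁻¹
          * (Real.exp (-(y - m) ^ 2 / (2 * V)) * Real.exp (c * y ^ 2)) := by ring
    _ = (Real.sqrt (2 * Real.pi * V))⁻¹ * (Real.exp (c * m ^ 2 / (1 - 2 * c * V))
          * Real.exp (-(y - m / (1 - 2 * c * V)) ^ 2 / (2 * (V / (1 - 2 * c * V))))) := by
        rw [hexp]
    _ = _ := by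
        field_simp [(Real.sqrt_pos.2 (by linarith : (0:ℝ) < 1 - 2 * V * c)).ne']

lemma integral_exp_mul_sq_gaussianReal {V c : ℝ} (hV : 0 < V) (hc : 2 * c * V < 1) (m : ℝ) :
    ∫ y, Real.exp (c * y ^ 2) ∂(gaussianReal m (Real.toNNReal V))
      = (1 - 2 * c * V) ^ (-(1 : ℝ) / 2) * Real.exp (c * m ^ 2 / (1 - 2 * c * V)) := by
  have ht : 0 < 1 - 2 * c * V := by linarith
  have hv0 : Real.toNNReal V ≠ 0 := by
    simp only [ne_eq, Real.toNNReal_eq_zero, not_le]; exact hV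
  have hv'0 : Real.toNNReal (V / (1 - 2 * c * V)) ≠ 0 := by
    simp only [ne_eq, Real.toNNReal_eq_zero, not_le]; exact div_pos hV ht
  have hmeq : gaussianReal m (Real.toNNReal V)
      = volume.withDensity
          (fun y => ((Real.toNNReal (gaussianPDFReal m (Real.toNNReal V) y) : ℝ≥0) : ℝ≥0∞)) := by
    rw [gaussianReal_of_var_ne_zero _ hv0]; rfl
  rw [hmeq, integral_withDensity_eq_integral_smul
      ((measurable_gaussianPDFReal m (Real.toNNReal V)).real_toNNReal) _]
  have hpt : (fun y => Real.toNNReal (gaussianPDFReal m (Real.toNNReal V) y)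
        • Real.exp (c * y ^ 2))
      = fun y => ((1 - 2 * c * V) ^ (-(1 : ℝ) / 2) * Real.exp (c * m ^ 2 / (1 - 2 * c * V)))
          * gaussianPDFReal (m / (1 - 2 * c * V)) (Real.toNNReal (V / (1 - 2 * c * V))) y := by
    funext y
    rw [NNReal.smul_def, smul_eq_mul, Real.coe_toNNReal _ (gaussianPDFReal_nonneg _ _ _),
      gauss_pdf_mul_exp hV hc m y]
  rw [hpt, integral_const_mul, integral_gaussianPDFReal_eq_one _ hv'0, mul_one]

lemma integrable_exp_mul_sq_gaussianReal_iff {W : ℝ} (hW : 0 < W) (b : ℝ) :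
    Integrable (fun x => Real.exp (b * x ^ 2)) (gaussianReal 0 (Real.toNNReal W))
      ↔ 2 * b * W < 1 := by
  have hw0 : Real.toNNReal W ≠ 0 := by
    simp only [ne_eq, Real.toNNReal_eq_zero, not_le]; exact hW
  have hmeq : gaussianReal 0 (Real.toNNReal W)
      = volume.withDensity
          (fun y => ((Real.toNNReal (gaussianPDFReal 0 (Real.toNNReal W) y) : ℝ≥0) : ℝ≥0∞)) := by
    rw [gaussianReal_of_var_ne_zero _ hw0]; rfl
  rw [hmeq, integrable_withDensity_iff_integrable_smul
      ((measurable_gaussianPDFReal 0 (Real.toNNReal W)).real_toNNReal)]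
  have hs2 : 0 < Real.sqrt (2 * Real.pi * W) := Real.sqrt_pos.2 (by positivity)
  have hpt : (fun x => Real.toNNReal (gaussianPDFReal 0 (Real.toNNReal W) x)
        • Real.exp (b * x ^ 2))
      = fun x => (Real.sqrt (2 * Real.pi * W))⁻¹
          * Real.exp (-(1 / (2 * W) - b) * x ^ 2) := by
    funext x
    rw [NNReal.smul_def, smul_eq_mul, Real.coe_toNNReal _ (gaussianPDFReal_nonneg _ _ _),
      gaussianPDFReal, Real.coe_toNNReal _ hW.le]
    have e1 : Real.exp (-(x - 0) ^ 2 / (2 * W)) * Real.exp (b * x ^ 2)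
        = Real.exp (-(1 / (2 * W) - b) * x ^ 2) := by
      rw [← Real.exp_add]
      congr 1
      field_simp
      ring
    rw [mul_assoc, e1]
  rw [hpt, integrable_const_mul_iff (isUnit_iff_ne_zero.2 (inv_ne_zero hs2.ne')),
    integrable_exp_neg_mul_sq_iff, sub_pos, lt_div_iff₀ (by positivity : (0:ℝ) < 2 * W)]
  constructor <;> intro h <;> nlinarith

lemma barQfun_const_mul_exp (a : ℝ) {σ c : ℝ} (hσ : 0 < σ) (hc : 2 * c * σ ^ 2 < 1) (C x : ℝ) :
    barQfun a σ (fun y => C * Real.exp (c * y ^ 2)) x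
      = (C * (1 - 2 * c * σ ^ 2) ^ (-(1 : ℝ) / 2))
        * Real.exp ((c * a ^ 2 / (1 - 2 * c * σ ^ 2)) * x ^ 2) := by
  have hV : 0 < σ ^ 2 := by positivity
  rw [barQfun, integral_const_mul, integral_exp_mul_sq_gaussianReal hV hc (a * x)]
  have h : c * (a * x) ^ 2 / (1 - 2 * c * σ ^ 2)
      = c * a ^ 2 / (1 - 2 * c * σ ^ 2) * x ^ 2 := by ring
  rw [h]
  ring

/-- For the symmetric BAR model with `a ∈ (-1,1)`, `a ≠ 0`, `σ > 0`: for every `k ≥ 1`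
there is a finite constant `C_k` with
`𝒬^{k-1}𝔥(x) = C_k exp(a^{2k} x²/(2σ_a²(1+a^{2k})))` for all `x`, where
`σ_a² = σ²/(1-a²)`; consequently `𝔥_k := 𝒬^{k-1}𝔥 ∈ L⁶(μ)` iff `a^{2k} < 1/5`. -/
theorem barh_iterate_formula (a σ : ℝ) (ha : a ∈ Set.Ioo (-1 : ℝ) 1) (ha0 : a ≠ 0)
    (hσ : 0 < σ) (k : ℕ) (hk : 1 ≤ k) :
    ∃ C : ℝ, 0 < C ∧
      (∀ x : ℝ,
        (barQfun a σ)^[k - 1] (barh a σ) x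
          = C * Real.exp (a ^ (2 * k) * x ^ 2
              / (2 * (σ ^ 2 / (1 - a ^ 2)) * (1 + a ^ (2 * k)))))
      ∧ (MemLp ((barQfun a σ)^[k - 1] (barh a σ)) 6
            (gaussianReal 0 (Real.toNNReal (σ ^ 2 / (1 - a ^ 2))))
          ↔ a ^ (2 * k) < 1 / 5) := by
  obtain ⟨ha1, ha2⟩ := ha
  have hA0 : 0 < a ^ 2 := by positivity
  have hA1 : a ^ 2 < 1 := by nlinarith
  have h1a : 0 < 1 - a ^ 2 := by linarith
  have hσ2 : 0 < σ ^ 2 := by positivity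
  set c : ℕ → ℝ := fun n => a ^ (2 * n) * (1 - a ^ 2) / (2 * σ ^ 2 * (1 + a ^ (2 * n)))
    with hcdef
  have hpowpos : ∀ n : ℕ, 0 < a ^ (2 * n) := by
    intro n; rw [pow_mul]; positivity
  have h1p : ∀ n : ℕ, 0 < 1 + a ^ (2 * n) := fun n => by linarith [hpowpos n]
  have hpe : ∀ n : ℕ, a ^ (2 * (n + 1)) = a ^ (2 * n) * a ^ 2 := by
    intro n; ring
  have hckval : ∀ n : ℕ, 2 * c n * σ ^ 2 = a ^ (2 * n) * (1 - a ^ 2) / (1 + a ^ (2 * n)) := by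
    intro n
    simp only [hcdef]
    field_simp [hσ.ne', (h1p n).ne']
  have hck : ∀ n : ℕ, 2 * c n * σ ^ 2 < 1 := by
    intro n
    rw [hckval n, div_lt_one (h1p n)]
    nlinarith [hpowpos n, hpowpos (n + 1), hpe n]
  have hgt : ∀ n : ℕ, 0 < 1 - 2 * c n * σ ^ 2 := fun n => by linarith [hck n]
  have hden : ∀ n : ℕ, 1 - 2 * c n * σ ^ 2 = (1 + a ^ (2 * (n + 1))) / (1 + a ^ (2 * n)) := by
    intro n
    have hq : (0:ℝ) < 1 + a ^ (2 * n) * a ^ 2 := by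
      have := mul_pos (hpowpos n) hA0
      linarith
    rw [hckval n, hpe n]
    field_simp [(h1p n).ne', hq.ne']
    ring
  have hrec : ∀ n : ℕ, c n * a ^ 2 / (1 - 2 * c n * σ ^ 2) = c (n + 1) := by
    intro n
    have hq : (0:ℝ) < 1 + a ^ (2 * n) * a ^ 2 := by
      have := mul_pos (hpowpos n) hA0
      linarith
    rw [hden n]
    simp only [hcdef]
    rw [hpe n]
    field_simp [hσ.ne', (h1p n).ne', hq.ne']
  have key : ∀ n : ℕ, ∃ C : ℝ, 0 < C ∧
      ∀ x, (barQfun a σ)^[n] (barh a σ) x = C * Real.exp (c (n + 1) * x ^ 2) := by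
    intro n
    induction n with
    | zero =>
      refine ⟨(1 - a ^ 4) ^ (-(1 : ℝ) / 4), ?_, ?_⟩
      · have h4 : a ^ 4 < 1 := by nlinarith
        have h4' : 0 < 1 - a ^ 4 := by linarith
        positivity
      · intro x
        have hc1 : c 1 = a ^ 2 * (1 - a ^ 2) / (2 * (1 + a ^ 2) * σ ^ 2) := by
          simp only [hcdef]
          norm_num
          ring
        simp only [Function.iterate_zero, id_eq, barh, hc1]
        congr 1
        ring
    | succ n ih =>
      obtain ⟨C, hC, hx⟩ := ih
      have hfun : (barQfun a σ)^[n] (barh a σ)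
          = fun y => C * Real.exp (c (n + 1) * y ^ 2) := funext hx
      refine ⟨C * (1 - 2 * c (n + 1) * σ ^ 2) ^ (-(1 : ℝ) / 2), ?_, ?_⟩
      · have := hgt (n + 1); positivity
      · intro x
        rw [Function.iterate_succ_apply', hfun,
          barQfun_const_mul_exp a hσ (hck (n + 1)) C x, hrec (n + 1)]
  obtain ⟨C, hC, hx⟩ := key (k - 1)
  have hk1 : k - 1 + 1 = k := Nat.succ_pred_eq_of_pos hk
  rw [hk1] at hx
  refine ⟨C, hC, ?_, ?_⟩
  · intro x
    rw [hx x]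
    congr 1
    simp only [hcdef]
    field_simp [hσ.ne', h1a.ne', (h1p k).ne']
  · have hW : 0 < σ ^ 2 / (1 - a ^ 2) := by positivity
    have hg : (barQfun a σ)^[k - 1] (barh a σ) = fun x => C * Real.exp (c k * x ^ 2) :=
      funext hx
    have hmeas : AEStronglyMeasurable ((barQfun a σ)^[k - 1] (barh a σ))
        (gaussianReal 0 (Real.toNNReal (σ ^ 2 / (1 - a ^ 2)))) := by
      rw [hg]
      exact (continuous_const.mul
        (Real.continuous_exp.comp (continuous_const.mul (continuous_pow 2)))).aestronglyMeasurable
    have hiff := memLp_norm_rpow_iff (p := 6) (q := 6) hmeas (by norm_num) (by norm_num)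
    rw [show ((6 : ℝ≥0∞) / 6) = 1 from ENNReal.div_self (by norm_num) (by norm_num),
      memLp_one_iff_integrable] at hiff
    rw [← hiff]
    have hpt : (fun x => ‖(barQfun a σ)^[k - 1] (barh a σ) x‖ ^ (6 : ℝ≥0∞).toReal)
        = fun x => C ^ 6 * Real.exp ((6 * c k) * x ^ 2) := by
      funext x
      rw [hg]
      have hpos : 0 < C * Real.exp (c k * x ^ 2) := by positivity
      simp only [Real.norm_eq_abs]
      rw [abs_of_pos hpos]
      rw [show ((6 : ℝ≥0∞).toReal) = ((6 : ℕ) : ℝ) by norm_num, Real.rpow_natCast,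
        mul_pow, ← Real.exp_nat_mul]
      congr 1
      push_cast
      ring
    rw [hpt, integrable_const_mul_iff (isUnit_iff_ne_zero.2 (by positivity : C ^ 6 ≠ 0)),
      integrable_exp_mul_sq_gaussianReal_iff hW]
    have hval : 2 * (6 * c k) * (σ ^ 2 / (1 - a ^ 2))
        = 6 * a ^ (2 * k) / (1 + a ^ (2 * k)) := by
      simp only [hcdef]
      field_simp [hσ.ne', h1a.ne', (h1p k).ne']
    rw [hval, div_lt_one (h1p k)]
    constructor <;> intro h <;> [linarith [hpowpos k]; linarith]
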